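/- Let ρ ∈ B₁(ℓ²(ℤ^d)) be a trace-class operator such that X_j ρ and ρ X_j are trace class for each j. Then the fiber map p ↦ [ρ]_p ∈ L¹(T^d), defined by [ρ]_p(k) = ρ̂(k − p/2, k + p/2) via the momentum-representation kernel, can be chosen continuously differentiable in p, with ∂/∂p_j [ρ]_p = (i/2)[{X_j, ρ}]_p. -/

import Mathlib

open MeasureTheory Complex

instance : Fact ((0 : ℝ) < 2 * Real.pi) := ⟨by positivity⟩

/-- The character `e^{i x·k}` of the torus `T^d = (ℝ/2πℤ)^d` at the lattice point
`x ∈ ℤ^d`. -/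
noncomputable def torusChar {d : ℕ} (x : Fin d → ℤ) (k : Fin d → AddCircle (2 * Real.pi)) :
    ℂ :=
  ∏ i, ((AddCircle.toCircle ((x i) • k i) : Circle) : ℂ)

/-- The fiber `[ρ]_p(k) = ρ̂(k - p/2, k + p/2)
  = (2π)^{-d} Σ_{x₁,x₂} ρ(x₁,x₂) e^{-i k·(x₁-x₂)} e^{i p·(x₁+x₂)/2}`
of a trace-class operator on `ℓ²(ℤ^d)` given by its position-representation kernel ρ. -/
noncomputable def fiberKernel {d : ℕ} (ρk : (Fin d → ℤ) → (Fin d → ℤ) → ℂ)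
    (p : Fin d → ℝ) (k : Fin d → AddCircle (2 * Real.pi)) : ℂ :=
  (1 / (2 * Real.pi) ^ d) * ∑' q : (Fin d → ℤ) × (Fin d → ℤ),
    ρk q.1 q.2 * torusChar (q.2 - q.1) k *
      Complex.exp (Complex.I * (∑ i, p i * ((q.1 i + q.2 i : ℤ) : ℝ)) / 2)

section AuxGeneral

open Filter Topology

variable {α : Type*} [MeasurableSpace α] {μ : Measure α} [IsFiniteMeasure μ] {ι : Type*}

omit [IsFiniteMeasure μ] in
lemma toL1_finset_sum (g : ι → α → ℂ) (hint : ∀ q, Integrable (g q) μ)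
    (s : Finset ι) (hs : Integrable (fun a => ∑ q ∈ s, g q a) μ) :
    hs.toL1 _ = ∑ q ∈ s, (hint q).toL1 (g q) := by
  classical
  induction s using Finset.induction_on with
  | empty =>
    simp only [Finset.sum_empty]
    exact Integrable.toL1_zero _
  | insert b t hb ih =>
    have ht : Integrable (fun a => ∑ q ∈ t, g q a) μ := integrable_finset_sum _ fun q _ => hint q
    have h1 : hs.toL1 _ = ((hint b).add ht).toL1 (g b + fun a => ∑ q ∈ t, g q a) := by
      rw [Integrable.toL1_eq_toL1_iff]
      filter_upwards with a
      simp [Finset.sum_insert hb]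
    rw [h1, Integrable.toL1_add _ _ (hint b) ht, ih ht, Finset.sum_insert hb]

lemma hasSum_toL1 {c : ι → ℂ} {h : ι → α → ℂ}
    (hc : Summable fun q => ‖c q‖) (hb : ∀ q a, ‖h q a‖ ≤ 1)
    (hint : ∀ q, Integrable (fun a => c q * h q a) μ)
    (hf : Integrable (fun a => ∑' q, c q * h q a) μ) :
    HasSum (fun q => (hint q).toL1 _) (hf.toL1 _) := by
  classical
  have hnorm : ∀ q a, ‖c q * h q a‖ ≤ ‖c q‖ := fun q a => by
    rw [norm_mul]
    calc ‖c q‖ * ‖h q a‖ ≤ ‖c q‖ * 1 := by gcongr; exact hb q a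
    _ = ‖c q‖ := mul_one _
  have hsa : ∀ a, Summable fun q => c q * h q a := fun a =>
    Summable.of_norm_bounded hc fun q => hnorm q a
  have key : ∀ s : Finset ι,
      ‖(∑ q ∈ s, (hint q).toL1 _) - hf.toL1 _‖
        ≤ (∑' q : {x // x ∉ s}, ‖c q.1‖) * (μ Set.univ).toReal := by
    intro s
    have ht : Integrable (fun a => ∑ q ∈ s, c q * h q a) μ :=
      integrable_finset_sum _ fun q _ => hint q
    rw [← toL1_finset_sum _ hint s ht, ← Integrable.toL1_sub _ _ ht hf,
      L1.norm_of_fun_eq_integral_norm]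
    have hpt : ∀ a, ‖((fun a => ∑ q ∈ s, c q * h q a) - fun a => ∑' q, c q * h q a) a‖
        ≤ ∑' q : {x // x ∉ s}, ‖c q.1‖ := by
      intro a
      have hcompl := (hsa a).sum_add_tsum_compl (s := s)
      have heq : ((fun a => ∑ q ∈ s, c q * h q a) - fun a => ∑' q, c q * h q a) a
          = -∑' q : {x // x ∉ s}, c q.1 * h q.1 a := by
        simp only [Pi.sub_apply]
        rw [← hcompl]
        ring_nf
        rfl
      rw [heq, norm_neg]
      have hsub : Summable fun q : {x // x ∉ s} => ‖c q.1 * h q.1 a‖ :=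
        Summable.of_nonneg_of_le (fun q => norm_nonneg _) (fun q => hnorm q.1 a)
          (hc.subtype _)
      refine (norm_tsum_le_tsum_norm hsub).trans ?_
      exact hsub.tsum_le_tsum (fun q => hnorm q.1 a) (hc.subtype _)
    calc ∫ a, ‖((fun a => ∑ q ∈ s, c q * h q a) - fun a => ∑' q, c q * h q a) a‖ ∂μ
        ≤ ∫ _, (∑' q : {x // x ∉ s}, ‖c q.1‖) ∂μ :=
          integral_mono (ht.sub hf).norm (integrable_const _) hpt
      _ = (∑' q : {x // x ∉ s}, ‖c q.1‖) * (μ Set.univ).toReal := by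
          rw [integral_const, smul_eq_mul, mul_comm]; rfl
  have h0 : Tendsto (fun s : Finset ι =>
      (∑' q : {x // x ∉ s}, ‖c q.1‖) * (μ Set.univ).toReal) atTop (𝓝 0) := by
    simpa using (tendsto_tsum_compl_atTop_zero fun q => ‖c q‖).mul_const (μ Set.univ).toReal
  rw [HasSum, tendsto_iff_norm_sub_tendsto_zero]
  exact squeeze_zero (fun s => norm_nonneg _) key h0

end AuxGeneral

namespace FiberAux

variable {d : ℕ}

noncomputable def mq (q : (Fin d → ℤ) × (Fin d → ℤ)) (i : Fin d) : ℝ := ((q.1 i + q.2 i : ℤ) : ℝ)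

noncomputable def Cc (d : ℕ) : ℂ := 1 / (2 * (Real.pi : ℂ)) ^ d

noncomputable def hfun (q : (Fin d → ℤ) × (Fin d → ℤ))
    (k : Fin d → AddCircle (2 * Real.pi)) : ℂ :=
  torusChar (q.2 - q.1) k

lemma torusChar_norm (x : Fin d → ℤ) (k : Fin d → AddCircle (2 * Real.pi)) :
    ‖torusChar x k‖ = 1 := by
  simp [torusChar, Circle.norm_coe]

lemma torusChar_continuous (x : Fin d → ℤ) :
    Continuous fun k : Fin d → AddCircle (2 * Real.pi) => torusChar x k := by
  unfold torusChar
  refine continuous_finset_prod _ fun i _ => ?_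
  exact continuous_induced_dom.comp <| AddCircle.continuous_toCircle.comp <|
    (continuous_zsmul (x i)).comp (continuous_apply i)

lemma hfun_norm (q : (Fin d → ℤ) × (Fin d → ℤ)) (k : Fin d → AddCircle (2 * Real.pi)) :
    ‖hfun q k‖ = 1 := torusChar_norm _ _

lemma int_h (q : (Fin d → ℤ) × (Fin d → ℤ)) :
    Integrable (hfun q) (volume : Measure (Fin d → AddCircle (2 * Real.pi))) :=
  memLp_one_iff_integrable.1 <| MemLp.of_bound
    ((torusChar_continuous _).aestronglyMeasurable) 1
    (ae_of_all _ fun k => (hfun_norm q k).le)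

noncomputable def Hq (q : (Fin d → ℤ) × (Fin d → ℤ)) :
    Lp ℂ 1 (volume : Measure (Fin d → AddCircle (2 * Real.pi))) :=
  (int_h q).toL1 (hfun q)

noncomputable def Vol (d : ℕ) : ℝ :=
  ((volume : Measure (Fin d → AddCircle (2 * Real.pi))) Set.univ).toReal

lemma Vol_nonneg (d : ℕ) : 0 ≤ Vol d := ENNReal.toReal_nonneg

lemma Hq_norm (q : (Fin d → ℤ) × (Fin d → ℤ)) : ‖Hq q‖ = Vol d := by
  rw [Hq, L1.norm_of_fun_eq_integral_norm]
  have h1 : ∀ k, ‖hfun q k‖ = (fun _ : Fin d → AddCircle (2 * Real.pi) => (1:ℝ)) k :=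
    fun k => hfun_norm q k
  rw [integral_congr_ae (ae_of_all _ h1), integral_const, smul_eq_mul, mul_one, Vol]; rfl

lemma int_mul (b : ((Fin d → ℤ) × (Fin d → ℤ)) → ℂ) (q : (Fin d → ℤ) × (Fin d → ℤ)) :
    Integrable (fun k => b q * hfun q k)
      (volume : Measure (Fin d → AddCircle (2 * Real.pi))) :=
  (int_h q).const_mul _

lemma cont_sum (b : ((Fin d → ℤ) × (Fin d → ℤ)) → ℂ) (hb : Summable fun q => ‖b q‖) :
    Continuous fun k : Fin d → AddCircle (2 * Real.pi) => ∑' q, b q * hfun q k := by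
  refine continuous_tsum (fun q => continuous_const.mul (torusChar_continuous _)) hb fun q k => ?_
  rw [norm_mul, hfun_norm, mul_one]

lemma int_sum (b : ((Fin d → ℤ) × (Fin d → ℤ)) → ℂ) (hb : Summable fun q => ‖b q‖) :
    Integrable (fun k => ∑' q, b q * hfun q k)
      (volume : Measure (Fin d → AddCircle (2 * Real.pi))) := by
  refine memLp_one_iff_integrable.1 <| MemLp.of_bound
    (cont_sum b hb).aestronglyMeasurable (∑' q, ‖b q‖) (ae_of_all _ fun k => ?_)
  have hsub : Summable fun q => ‖b q * hfun q k‖ := by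
    refine Summable.of_nonneg_of_le (fun q => norm_nonneg _) (fun q => ?_) hb
    rw [norm_mul, hfun_norm, mul_one]
  refine (norm_tsum_le_tsum_norm hsub).trans (hsub.tsum_le_tsum (fun q => ?_) hb)
  rw [norm_mul, hfun_norm, mul_one]

/-- Lp sum of the series with coefficients `b`. -/
lemma hasSum_Hq (b : ((Fin d → ℤ) × (Fin d → ℤ)) → ℂ) (hb : Summable fun q => ‖b q‖) :
    HasSum (fun q => b q • Hq q) ((int_sum b hb).toL1 _) := by
  have hs := hasSum_toL1 (c := b) (h := hfun) hb (fun q k => (hfun_norm q k).le)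
    (fun q => int_mul b q) (int_sum b hb)
  have hsummand : ∀ q, (int_mul b q).toL1 (fun k => b q * hfun q k) = b q • Hq q := fun q =>
    Integrable.toL1_smul' (hfun q) (int_h q) (b q)
  exact (funext hsummand : _) ▸ hs

noncomputable def cfun (ρk : (Fin d → ℤ) → (Fin d → ℤ) → ℂ) (q : (Fin d → ℤ) × (Fin d → ℤ))
    (p : Fin d → ℝ) : ℂ :=
  Cc d * ρk q.1 q.2 * Complex.exp (Complex.I * ((∑ i, p i * mq q i : ℝ) : ℂ) / 2)

noncomputable def Tq (q : (Fin d → ℤ) × (Fin d → ℤ)) : (Fin d → ℝ) →L[ℝ] ℝ :=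
  ∑ i, mq q i • ContinuousLinearMap.proj i

lemma Tq_apply (q : (Fin d → ℤ) × (Fin d → ℤ)) (v : Fin d → ℝ) :
    Tq q v = ∑ i, mq q i * v i := by
  simp [Tq, ContinuousLinearMap.sum_apply]

lemma Tq_norm (q : (Fin d → ℤ) × (Fin d → ℤ)) : ‖Tq q‖ ≤ ∑ i, |mq q i| := by
  refine (norm_sum_le _ _).trans (Finset.sum_le_sum fun i _ => ?_)
  refine le_trans (ContinuousLinearMap.opNorm_smul_le _ _) ?_
  rw [Real.norm_eq_abs]
  have hp : ‖(ContinuousLinearMap.proj i : ((Fin d → ℝ) →L[ℝ] ℝ))‖ ≤ 1 := by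
    refine ContinuousLinearMap.opNorm_le_bound _ zero_le_one fun v => ?_
    simpa using norm_le_pi_norm v i
  calc |mq q i| * ‖(ContinuousLinearMap.proj i : ((Fin d → ℝ) →L[ℝ] ℝ))‖
      ≤ |mq q i| * 1 := by gcongr
    _ = |mq q i| := mul_one _

lemma cfun_norm (ρk : (Fin d → ℤ) → (Fin d → ℤ) → ℂ) (q : (Fin d → ℤ) × (Fin d → ℤ))
    (p : Fin d → ℝ) : ‖cfun ρk q p‖ = ‖Cc d‖ * ‖ρk q.1 q.2‖ := by
  rw [cfun, norm_mul, norm_mul]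
  have h1 : ‖Complex.exp (Complex.I * ((∑ i, p i * mq q i : ℝ) : ℂ) / 2)‖ = 1 := by
    rw [Complex.norm_exp]
    simp
  rw [h1, mul_one]

lemma cfun_eq (ρk : (Fin d → ℤ) → (Fin d → ℤ) → ℂ) (q : (Fin d → ℤ) × (Fin d → ℤ))
    (p : Fin d → ℝ) :
    cfun ρk q p = Cc d * ρk q.1 q.2 * Complex.exp ((Complex.I / 2) * ((Tq q p : ℝ) : ℂ)) := by
  rw [cfun]
  have hS : (∑ i, p i * mq q i) = Tq q p := by
    rw [Tq_apply]
    exact Finset.sum_congr rfl fun i _ => mul_comm _ _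
  rw [hS]
  congr 1
  ring

noncomputable def Dq (ρk : (Fin d → ℤ) → (Fin d → ℤ) → ℂ) (q : (Fin d → ℤ) × (Fin d → ℤ))
    (p : Fin d → ℝ) : (Fin d → ℝ) →L[ℝ] ℂ :=
  (cfun ρk q p * (Complex.I / 2)) • (Complex.ofRealCLM.comp (Tq q))

lemma hasFDerivAt_cfun (ρk : (Fin d → ℤ) → (Fin d → ℤ) → ℂ) (q : (Fin d → ℤ) × (Fin d → ℤ))
    (p : Fin d → ℝ) : HasFDerivAt (fun p => cfun ρk q p) (Dq ρk q p) p := by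
  have h1 : HasFDerivAt (fun p : Fin d → ℝ => ((Tq q p : ℝ) : ℂ))
      (Complex.ofRealCLM.comp (Tq q)) p :=
    Complex.ofRealCLM.hasFDerivAt.comp p (Tq q).hasFDerivAt
  have h2 := h1.const_mul ((Complex.I : ℂ) / 2)
  have h3 := h2.cexp
  have h4 := h3.const_mul (Cc d * ρk q.1 q.2)
  have hfun_eq : (fun p => cfun ρk q p)
      = fun p => Cc d * ρk q.1 q.2 * Complex.exp ((Complex.I / 2) * ((Tq q p : ℝ) : ℂ)) :=
    funext fun p => cfun_eq ρk q p
  rw [hfun_eq]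
  have hD_eq : Dq ρk q p
      = (Cc d * ρk q.1 q.2) • (Complex.exp (Complex.I / 2 * ((Tq q p : ℝ) : ℂ))
          • ((Complex.I / 2) • (Complex.ofRealCLM.comp (Tq q)))) := by
    rw [Dq, smul_smul, smul_smul, cfun_eq, mul_assoc]
  rw [hD_eq]
  exact h4

lemma Dq_norm_le (ρk : (Fin d → ℤ) → (Fin d → ℤ) → ℂ) (q : (Fin d → ℤ) × (Fin d → ℤ))
    (p : Fin d → ℝ) :
    ‖Dq ρk q p‖ ≤ ‖Cc d‖ * ‖ρk q.1 q.2‖ / 2 * ∑ i, |mq q i| := by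
  rw [Dq]
  refine le_trans (ContinuousLinearMap.opNorm_smul_le _ _) ?_
  have h1 : ‖cfun ρk q p * (Complex.I / 2)‖ = ‖Cc d‖ * ‖ρk q.1 q.2‖ / 2 := by
    rw [norm_mul, cfun_norm]
    have h2 : ‖(Complex.I / 2 : ℂ)‖ = 1 / 2 := by
      rw [norm_div]
      simp
    rw [h2]
    ring
  rw [h1]
  have h2 : ‖Complex.ofRealCLM.comp (Tq q)‖ ≤ ‖Tq q‖ := by
    refine ContinuousLinearMap.opNorm_le_bound _ (norm_nonneg _) fun v => ?_
    simp only [ContinuousLinearMap.comp_apply, Complex.ofRealCLM_apply, Complex.norm_real]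
    exact (Tq q).le_opNorm v
  calc ‖Cc d‖ * ‖ρk q.1 q.2‖ / 2 * ‖Complex.ofRealCLM.comp (Tq q)‖
      ≤ ‖Cc d‖ * ‖ρk q.1 q.2‖ / 2 * ‖Tq q‖ := by gcongr
    _ ≤ ‖Cc d‖ * ‖ρk q.1 q.2‖ / 2 * ∑ i, |mq q i| := by
        gcongr
        exact Tq_norm q

lemma Tq_single (q : (Fin d → ℤ) × (Fin d → ℤ)) (j : Fin d) :
    Tq q (Pi.single j 1) = mq q j := by
  rw [Tq_apply]
  simp [Pi.single_apply]

lemma cfun_continuous (ρk : (Fin d → ℤ) → (Fin d → ℤ) → ℂ) (q : (Fin d → ℤ) × (Fin d → ℤ)) :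
    Continuous fun p : Fin d → ℝ => cfun ρk q p := by
  unfold cfun
  fun_prop

end FiberAux

open FiberAux

/-- If ρ is trace class (summable position kernel) and `X_j ρ`, `ρ X_j` are
trace class (first-moment summability of the kernel), then the fiber map
`p ↦ [ρ]_p ∈ L¹(T^d)` can be chosen continuously differentiable in p, with
`∂/∂p_j [ρ]_p = (i/2) [{X_j, ρ}]_p`, where `{X_j, ρ}` has kernel
`(x₁ⱼ + x₂ⱼ) ρ(x₁, x₂)`. -/
theorem fiber_map_contDiff {d : ℕ}
    (ρk : (Fin d → ℤ) → (Fin d → ℤ) → ℂ)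
    (htc : Summable fun q : (Fin d → ℤ) × (Fin d → ℤ) => ‖ρk q.1 q.2‖)
    (hmom : ∀ j : Fin d, Summable fun q : (Fin d → ℤ) × (Fin d → ℤ) =>
      |((q.1 j + q.2 j : ℤ) : ℝ)| * ‖ρk q.1 q.2‖) :
    ∃ F : (Fin d → ℝ) → Lp ℂ 1 (volume : Measure (Fin d → AddCircle (2 * Real.pi))),
      ContDiff ℝ 1 F ∧
      (∀ p : Fin d → ℝ,
        (F p : (Fin d → AddCircle (2 * Real.pi)) → ℂ) =ᵐ[volume] fiberKernel ρk p) ∧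
      (∀ (p : Fin d → ℝ) (j : Fin d),
        ((fderiv ℝ F p) (Pi.single j 1) : (Fin d → AddCircle (2 * Real.pi)) → ℂ)
          =ᵐ[volume]
        fun k => (Complex.I / 2) *
          ((1 / (2 * Real.pi) ^ d) * ∑' q : (Fin d → ℤ) × (Fin d → ℤ),
            ((q.1 j + q.2 j : ℤ) : ℝ) * ρk q.1 q.2 * torusChar (q.2 - q.1) k *
              Complex.exp (Complex.I * (∑ i, p i * ((q.1 i + q.2 i : ℤ) : ℝ)) / 2))) := by
  classical
  -- the summable bound for the derivatives
  set u : ((Fin d → ℤ) × (Fin d → ℤ)) → ℝ :=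
    fun q => ‖Cc d‖ * ‖ρk q.1 q.2‖ / 2 * (∑ i, |mq q i|) * Vol d with hu_def
  have su : Summable u := by
    have h1 : Summable fun q : (Fin d → ℤ) × (Fin d → ℤ) => ∑ i, |mq q i| * ‖ρk q.1 q.2‖ := by
      refine summable_sum fun i _ => ?_
      simpa [mq] using hmom i
    have h2 := h1.mul_left (‖Cc d‖ * Vol d / 2)
    refine h2.congr fun q => ?_
    rw [hu_def, ← Finset.sum_mul]
    ring
  -- derivative of each summand
  have hφd : ∀ (q : (Fin d → ℤ) × (Fin d → ℤ)) (p : Fin d → ℝ),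
      HasFDerivAt (fun p => cfun ρk q p • Hq q) ((Dq ρk q p).smulRight (Hq q)) p :=
    fun q p => (hasFDerivAt_cfun ρk q p).smul_const (Hq q)
  have hφ'le : ∀ (q : (Fin d → ℤ) × (Fin d → ℤ)) (p : Fin d → ℝ),
      ‖(Dq ρk q p).smulRight (Hq q)‖ ≤ u q := by
    intro q p
    have hnn : 0 ≤ u q := by
      rw [hu_def]
      refine mul_nonneg (mul_nonneg (by positivity) ?_) (Vol_nonneg d)
      exact Finset.sum_nonneg fun i _ => abs_nonneg _
    refine ContinuousLinearMap.opNorm_le_bound _ hnn fun v => ?_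
    rw [ContinuousLinearMap.smulRight_apply]
    refine le_trans (norm_smul_le _ _) ?_
    rw [Hq_norm]
    calc ‖(Dq ρk q p) v‖ * Vol d
        ≤ (‖Dq ρk q p‖ * ‖v‖) * Vol d :=
          mul_le_mul_of_nonneg_right ((Dq ρk q p).le_opNorm v) (Vol_nonneg d)
      _ ≤ ((‖Cc d‖ * ‖ρk q.1 q.2‖ / 2 * ∑ i, |mq q i|) * ‖v‖) * Vol d :=
          mul_le_mul_of_nonneg_right
            (mul_le_mul_of_nonneg_right (Dq_norm_le ρk q p) (norm_nonneg v)) (Vol_nonneg d)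
      _ = u q * ‖v‖ := by rw [hu_def]; ring
  have hCV : Summable fun q : (Fin d → ℤ) × (Fin d → ℤ) => ‖Cc d‖ * ‖ρk q.1 q.2‖ * Vol d :=
    (htc.mul_left _).mul_right _
  have hsum0 : ∀ p : Fin d → ℝ, Summable fun q => cfun ρk q p • Hq q := by
    intro p
    refine Summable.of_norm_bounded hCV fun q => ?_
    refine le_trans (norm_smul_le _ _) ?_
    rw [cfun_norm, Hq_norm]
  have hF : ∀ p : Fin d → ℝ,
      HasFDerivAt (fun p => ∑' q, cfun ρk q p • Hq q)
        (∑' q, (Dq ρk q p).smulRight (Hq q)) p :=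
    fun p => hasFDerivAt_tsum su hφd hφ'le (hsum0 0) p
  have sφ' : ∀ p : Fin d → ℝ,
      Summable fun q => (Dq ρk q p).smulRight (Hq q) :=
    fun p => Summable.of_norm_bounded su fun q => hφ'le q p
  refine ⟨fun p => ∑' q, cfun ρk q p • Hq q, ?_, ?_, ?_⟩
  · -- ContDiff
    rw [contDiff_one_iff_fderiv]
    refine ⟨fun p => (hF p).differentiableAt, ?_⟩
    have hfd : (fderiv ℝ fun p => ∑' q, cfun ρk q p • Hq q)
        = fun p => ∑' q, (Dq ρk q p).smulRight (Hq q) := funext fun p => (hF p).fderiv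
    rw [hfd]
    refine continuous_tsum (fun q => ?_) su fun q p => hφ'le q p
    have hq_eq : (fun p => (Dq ρk q p).smulRight (Hq q))
        = fun p => (cfun ρk q p * (Complex.I / 2)) •
            ((Complex.ofRealCLM.comp (Tq q)).smulRight (Hq q)) := by
      funext p
      refine ContinuousLinearMap.ext fun v => ?_
      simp only [Dq, ContinuousLinearMap.smulRight_apply, ContinuousLinearMap.smul_apply,
        ContinuousLinearMap.coe_smul', Pi.smul_apply, smul_eq_mul, smul_smul]
    rw [hq_eq]
    exact ((cfun_continuous ρk q).mul continuous_const).smul continuous_const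
  · -- identification of F p
    intro p
    have hb : Summable fun q : (Fin d → ℤ) × (Fin d → ℤ) => ‖cfun ρk q p‖ :=
      (htc.mul_left ‖Cc d‖).congr fun q => (cfun_norm ρk q p).symm
    have hs := hasSum_Hq (fun q => cfun ρk q p) hb
    have heq : (∑' q, cfun ρk q p • Hq q) = ((int_sum _ hb).toL1 _ :
        Lp ℂ 1 (volume : Measure (Fin d → AddCircle (2 * Real.pi)))) := hs.tsum_eq
    show (((∑' q, cfun ρk q p • Hq q) :
        Lp ℂ 1 (volume : Measure (Fin d → AddCircle (2 * Real.pi)))) :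
        (Fin d → AddCircle (2 * Real.pi)) → ℂ) =ᵐ[volume] fiberKernel ρk p
    rw [heq]
    refine (int_sum _ hb).coeFn_toL1.trans ?_
    have hpt : (fun k => ∑' q, cfun ρk q p * hfun q k) = fiberKernel ρk p := by
      funext k
      rw [fiberKernel, ← tsum_mul_left]
      refine tsum_congr fun q => ?_
      simp only [cfun, hfun, mq, Cc]
      push_cast
      ring
    rw [hpt]
  · -- derivative identification
    intro p j
    have hfd : fderiv ℝ (fun p => ∑' q, cfun ρk q p • Hq q) p
        = ∑' q, (Dq ρk q p).smulRight (Hq q) := (hF p).fderiv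
    rw [hfd]
    have happ := (ContinuousLinearMap.apply ℝ
      (Lp ℂ 1 (volume : Measure (Fin d → AddCircle (2 * Real.pi))))
      (Pi.single j 1)).map_tsum (sφ' p)
    simp only [ContinuousLinearMap.apply_apply] at happ
    rw [happ]
    have hterm : ∀ q, ((Dq ρk q p).smulRight (Hq q)) (Pi.single j 1)
        = (cfun ρk q p * (Complex.I / 2) * ((mq q j : ℝ) : ℂ)) • Hq q := by
      intro q
      simp [Dq, ContinuousLinearMap.smulRight_apply, ContinuousLinearMap.smul_apply,
        Tq_single, smul_smul]
    rw [tsum_congr hterm]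
    have hb' : Summable fun q : (Fin d → ℤ) × (Fin d → ℤ) =>
        ‖cfun ρk q p * (Complex.I / 2) * ((mq q j : ℝ) : ℂ)‖ := by
      have h1 := (hmom j).mul_left (‖Cc d‖ * (1 / 2))
      refine h1.congr fun q => ?_
      rw [norm_mul, norm_mul, cfun_norm]
      have h2 : ‖(Complex.I / 2 : ℂ)‖ = 1 / 2 := by
        rw [norm_div]
        simp
      rw [h2, Complex.norm_real, Real.norm_eq_abs]
      simp only [mq]
      ring
    have hs := hasSum_Hq (fun q => cfun ρk q p * (Complex.I / 2) * ((mq q j : ℝ) : ℂ)) hb'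
    have heq : (∑' q, (cfun ρk q p * (Complex.I / 2) * ((mq q j : ℝ) : ℂ)) • Hq q)
        = ((int_sum _ hb').toL1 _ :
        Lp ℂ 1 (volume : Measure (Fin d → AddCircle (2 * Real.pi)))) := hs.tsum_eq
    rw [heq]
    refine (int_sum _ hb').coeFn_toL1.trans ?_
    have hpt : (fun k => ∑' q, (cfun ρk q p * (Complex.I / 2) * ((mq q j : ℝ) : ℂ)) * hfun q k)
        = fun k => (Complex.I / 2) *
          ((1 / (2 * Real.pi) ^ d) * ∑' q : (Fin d → ℤ) × (Fin d → ℤ),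
            ((q.1 j + q.2 j : ℤ) : ℝ) * ρk q.1 q.2 * torusChar (q.2 - q.1) k *
              Complex.exp (Complex.I * (∑ i, p i * ((q.1 i + q.2 i : ℤ) : ℝ)) / 2)) := by
      funext k
      rw [← tsum_mul_left, ← tsum_mul_left]
      refine tsum_congr fun q => ?_
      simp only [cfun, hfun, mq, Cc]
      push_cast
      ring
    rw [hpt]
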